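/- Let n ≥ 1, t ≥ 1 be integers with ε = 1/(3tn²). Then 2 − 2cos(1/n) + (1 − tε)² > 1; equivalently, two unit-diameter balls with centers (1, φ, z) and (1, φ', z') in cylindrical coordinates with |φ − φ'| ≥ 1/n and |z − z'| ≥ 1 − tε do not intersect. -/

import Mathlib

noncomputable def pt3 (a b c : ℝ) : EuclideanSpace ℝ (Fin 3) := WithLp.toLp 2 ![a, b, c]

/-- The point of ℝ³ with cylindrical coordinates (r, φ, z). -/
noncomputable def cyl (r φ z : ℝ) : EuclideanSpace ℝ (Fin 3) :=
  pt3 (r * Real.cos φ) (r * Real.sin φ) z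

lemma cyl_dist_sq (φ φ' z z' : ℝ) :
    dist (cyl 1 φ z) (cyl 1 φ' z') ^ 2 = 2 - 2 * Real.cos (φ - φ') + (z - z') ^ 2 := by
  have h : dist (cyl 1 φ z) (cyl 1 φ' z') =
      Real.sqrt (∑ i : Fin 3, (cyl 1 φ z i - cyl 1 φ' z' i) ^ 2) := by
    rw [EuclideanSpace.dist_eq]
    congr 1
    apply Finset.sum_congr rfl
    intro i _
    rw [Real.dist_eq, sq_abs]
  rw [h, Real.sq_sqrt (by positivity)]
  simp [cyl, pt3, Fin.sum_univ_three, Real.cos_sub]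
  nlinarith [Real.sin_sq_add_cos_sq φ, Real.sin_sq_add_cos_sq φ']

set_option maxHeartbeats 1000000 in
theorem stmt_15 (n t : ℕ) (hn : 1 ≤ n) (ht : 1 ≤ t) (ε : ℝ)
    (hε : ε = 1 / (3 * t * n ^ 2)) :
    2 - 2 * Real.cos (1 / n) + (1 - t * ε) ^ 2 > 1 ∧
    ∀ φ φ' z z' : ℝ, 1 / n ≤ |φ - φ'| → |φ - φ'| ≤ Real.pi → 1 - t * ε ≤ |z - z'| →
      Disjoint (Metric.closedBall (cyl 1 φ z) (1/2))
        (Metric.closedBall (cyl 1 φ' z') (1/2)) := by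
  have hn0 : (0:ℝ) < n := by exact_mod_cast hn
  have ht0 : (0:ℝ) < t := by exact_mod_cast ht
  have htε : (t:ℝ) * ε = 1 / (3 * n ^ 2) := by
    rw [hε]; field_simp
  have hn1 : (1:ℝ) ≤ n := by exact_mod_cast hn
  have hinv : (0:ℝ) < 1 / n := by positivity
  have hinv1 : 1 / (n:ℝ) ≤ 1 := by
    rw [div_le_one hn0]; exact hn1
  -- cos bound via Real.cos_bound
  have hb := Real.cos_bound (x := 1 / n) (by
    rw [abs_of_pos hinv]; exact hinv1)
  have hcos : Real.cos (1 / n) ≤ 1 - (1/n)^2 / 2 + (1/n)^4 * (5/96) := by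
    have := abs_le.mp hb
    have h1 : |(1:ℝ)/n| ^ 4 = (1/n)^4 := by
      rw [abs_of_pos hinv]
    nlinarith [this.2]
  have hn2 : (1:ℝ) ≤ (n:ℝ)^2 := by nlinarith
  have hn4 : (n:ℝ)^2 ≤ (n:ℝ)^4 := by nlinarith
  have key : 2 - 2 * Real.cos (1 / n) + (1 - t * ε) ^ 2 > 1 := by
    rw [htε]
    have e1 : ((1:ℝ)/n)^2 = 1/(n:ℝ)^2 := by ring
    have e2 : ((1:ℝ)/n)^4 = 1/(n:ℝ)^4 := by ring
    have hpos2 : (0:ℝ) < (n:ℝ)^2 := by positivity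
    have hpos4 : (0:ℝ) < (n:ℝ)^4 := by positivity
    rw [e1, e2] at hcos
    have expand : (1 - 1 / (3 * (n:ℝ) ^ 2)) ^ 2 = 1 - (2/3)*(1/(n:ℝ)^2) + (1/9)*(1/(n:ℝ)^4) := by
      field_simp; ring
    rw [expand]
    have h12 : 1/(n:ℝ)^4 ≤ 1/(n:ℝ)^2 := one_div_le_one_div_of_le hpos2 hn4
    have hb0 : (0:ℝ) < 1/(n:ℝ)^4 := by positivity
    linarith
  refine ⟨key, fun φ φ' z z' h1 h2 h3 => ?_⟩
  have htε' : (t:ℝ) * ε ≤ 1/3 := by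
    rw [htε]
    rw [div_le_div_iff₀ (by positivity) (by norm_num)]
    nlinarith
  have hz : (1 - t*ε)^2 ≤ (z - z')^2 := by
    have h0 : (0:ℝ) ≤ 1 - t*ε := by linarith
    calc (1 - t*ε)^2 ≤ |z - z'|^2 := by nlinarith
    _ = (z - z')^2 := sq_abs _
  have hcosφ : Real.cos (φ - φ') ≤ Real.cos (1 / n) := by
    have : Real.cos (φ - φ') = Real.cos |φ - φ'| := (Real.cos_abs _).symm
    rw [this]
    exact Real.cos_le_cos_of_nonneg_of_le_pi hinv.le h2 h1
  have hdist2 : 1 < dist (cyl 1 φ z) (cyl 1 φ' z') ^ 2 := by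
    rw [cyl_dist_sq]
    nlinarith
  have hdist : 1 < dist (cyl 1 φ z) (cyl 1 φ' z') := by
    nlinarith [dist_nonneg (x := cyl 1 φ z) (y := cyl 1 φ' z')]
  have hlt : (1:ℝ)/2 + 1/2 < dist (cyl 1 φ z) (cyl 1 φ' z') := by linarith
  exact Metric.closedBall_disjoint_closedBall hlt
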